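/- There exists y ∈ K satisfying the hypotheses of Theorem main: y does not lie in the k-linear span of {1, x}; K = k(x, y); and σ(y) − y = α·D(y) (indeed one may take y = h^p for some h ∈ K fixed by σ, so that σ(y) = y and D(y) = 0). -/

import Mathlib

open IntermediateField Polynomial

set_option maxHeartbeats 1000000 in
theorem stmt13 (k K : Type*) [Field k] [IsAlgClosed k] [Field K] [Algebra k K]
    (p : ℕ) (hp2 : 2 < p) [CharP k p]
    (x : K) (hx : Transcendental k x)
    [FiniteDimensional ↥(IntermediateField.adjoin k ({x} : Set K)) K]
    [Algebra.IsSeparable ↥(IntermediateField.adjoin k ({x} : Set K)) K]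
    (D : Derivation k K K) (hDx : D x = 1)
    (σ : K ≃ₐ[k] K) (hord : orderOf σ = p)
    (α : k) (hα : α ≠ 0) (hσx : σ x = x + algebraMap k K α) :
    ∃ y : K,
      y ∉ Submodule.span k ({1, x} : Set K) ∧
      IntermediateField.adjoin k ({x, y} : Set K) = ⊤ ∧
      σ y - y = algebraMap k K α * D y ∧
      ∃ h : K, σ h = h ∧ y = h ^ p := by
  classical
  have hinj : Function.Injective (algebraMap k K) := (algebraMap k K).injective
  haveI hKp : CharP K p := charP_of_injective_algebraMap hinj p
  have hp : p.Prime := (CharP.char_is_prime_or_zero k p).resolve_right (by omega)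
  haveI : Fact p.Prime := ⟨hp⟩
  haveI : ExpChar K p := ExpChar.prime hp
  have hpK : (p : K) = 0 := CharP.cast_eq_zero K p
  set A : K := algebraMap k K α with hA
  have hA0 : A ≠ 0 := fun h => hα (hinj (by simpa [hA] using h))
  set c : K := algebraMap k K (α ^ (p - 1)) with hc
  have hc0 : c ≠ 0 := fun h => pow_ne_zero (p - 1) hα (hinj (by simpa [hc] using h))
  set z : K := x ^ p - c * x with hz
  -- D of p-th powers vanishes
  have hDpow : ∀ t : K, D (t ^ p) = 0 := by
    intro t
    rw [Derivation.leibniz_pow, nsmul_eq_mul, hpK, zero_mul]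
  -- σ fixes z
  have hcA : c * A = A ^ p := by
    rw [hA, hc, ← map_mul, ← map_pow, ← pow_succ]
    congr 2
    omega
  have hσz : σ z = z := by
    have hσc : σ c = c := σ.commutes _
    have hσA : σ A = A := σ.commutes _
    rw [hz, map_sub, map_mul, map_pow, hσx, hσc, add_pow_char]
    linear_combination -hcA
  -- the group generated by σ and its fixed field
  have hσfin : IsOfFinOrder σ := by rw [← orderOf_pos_iff, hord]; exact hp.pos
  set H : Subgroup (K ≃ₐ[k] K) := Subgroup.zpowers σ with hH
  haveI : Finite ↥H := hσfin.finite_zpowers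
  haveI : Fintype ↥H := Fintype.ofFinite _
  haveI : FaithfulSMul ↥H K := ⟨fun {g₁ g₂} h => Subtype.ext (AlgEquiv.ext h)⟩
  set F : IntermediateField k K := IntermediateField.fixedField H with hF
  have hcard : Fintype.card ↥H = p := by
    rw [← Nat.card_eq_fintype_card, Nat.card_zpowers, hord]
  have hfinrank : Module.finrank ↥F K = p := by
    rw [show Module.finrank ↥F K = Fintype.card ↥H from FixedPoints.finrank_eq_card ↥H K, hcard]
  haveI : FiniteDimensional ↥F K :=
    (inferInstance : FiniteDimensional ↥(FixedPoints.subfield ↥H K) K)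
  have hmemF : ∀ t : K, σ t = t → t ∈ F := by
    intro t ht g
    have hle : Subgroup.zpowers σ ≤ MulAction.stabilizer (K ≃ₐ[k] K) t :=
      Subgroup.zpowers_le.mpr ht
    exact hle g.2
  have hmemF' : ∀ t : K, t ∈ F → σ t = t := by
    intro t ht
    exact ht ⟨σ, Subgroup.mem_zpowers σ⟩
  -- K = F(x)
  have hxF : x ∉ F := by
    intro hxF
    have := hmemF' x hxF
    rw [hσx] at this
    exact hA0 (by linear_combination this)
  have hFx : IntermediateField.adjoin ↥F ({x} : Set K) = ⊤ := by
    set N := IntermediateField.adjoin ↥F ({x} : Set K) with hN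
    have hmul : Module.finrank ↥F ↥N * Module.finrank ↥N K = p := by
      rw [Module.finrank_mul_finrank, hfinrank]
    have hdvd : Module.finrank ↥F ↥N ∣ p := ⟨_, hmul.symm⟩
    rcases (Nat.Prime.eq_one_or_self_of_dvd hp _ hdvd) with h1 | h1
    · exfalso
      have : N = ⊥ := IntermediateField.finrank_eq_one_iff.mp h1
      have hxN : x ∈ N := IntermediateField.subset_adjoin _ _ rfl
      rw [this, IntermediateField.mem_bot] at hxN
      obtain ⟨f, hf⟩ := hxN
      exact hxF (hf ▸ f.2)
    · have h2 : Module.finrank ↥N K = 1 := by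
        rw [h1] at hmul
        exact mul_left_cancel₀ hp.ne_zero (by rw [hmul, mul_one])
      have hbt : (⊥ : Subalgebra ↥N K) = ⊤ := Subalgebra.bot_eq_top_of_finrank_eq_one h2
      apply IntermediateField.toSubalgebra_injective
      apply Subalgebra.toSubmodule_injective
      apply Submodule.eq_top_iff'.mpr
      intro t
      have : t ∈ (⊥ : Subalgebra ↥N K) := hbt.symm ▸ Algebra.mem_top
      obtain ⟨n, hn⟩ := this
      exact hn ▸ n.2
  -- the subfields E = k(z) ≤ X = k(x), and E ≤ F
  set Xf : IntermediateField k K := IntermediateField.adjoin k ({x} : Set K) with hXf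
  set E : IntermediateField k K := IntermediateField.adjoin k ({z} : Set K) with hE
  have hxX : x ∈ Xf := IntermediateField.subset_adjoin _ _ rfl
  have hzX : z ∈ Xf := by
    rw [hz]
    exact sub_mem (pow_mem hxX p) (mul_mem (Xf.algebraMap_mem _) hxX)
  have hEX : E ≤ Xf := IntermediateField.adjoin_le_iff.mpr (by simpa using hzX)
  have hzF : z ∈ F := hmemF z hσz
  have hEF : E ≤ F := IntermediateField.adjoin_le_iff.mpr (by simpa using hzF)
  have hzE : z ∈ E := IntermediateField.subset_adjoin _ _ rfl
  -- separability of x over E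
  haveI : CharP ↥E p := charP_of_injective_algebraMap
    (algebraMap k ↥E).injective p
  set z₀ : ↥E := ⟨z, hzE⟩ with hz₀
  set c₀ : ↥E := ⟨c, E.algebraMap_mem _⟩ with hc₀
  have hc₀0 : c₀ ≠ 0 := fun h => hc0 (by simpa [hc₀, Subtype.ext_iff] using h)
  set g : Polynomial ↥E := X ^ p - C c₀ * X - C z₀ with hg
  have hgmonic : g.Monic := by
    have hdeg1 : (C c₀ * X + C z₀ : Polynomial ↥E).degree ≤ 1 := by
      apply le_trans (Polynomial.degree_add_le _ _)
      apply max_le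
      · apply le_trans (Polynomial.degree_mul_le _ _)
        calc (C c₀ : Polynomial ↥E).degree + (X : Polynomial ↥E).degree
            ≤ 0 + 1 := add_le_add Polynomial.degree_C_le (le_of_eq Polynomial.degree_X)
          _ = 1 := by norm_num
      · exact le_trans Polynomial.degree_C_le (by norm_num)
    have hrw : g = X ^ p - (C c₀ * X + C z₀) := by rw [hg, sub_sub]
    rw [hrw]
    apply Polynomial.monic_X_pow_sub
    apply lt_of_le_of_lt hdeg1
    exact_mod_cast (by omega : 1 < p)
  have haeval : Polynomial.aeval x g = 0 := by
    have h₁ : (algebraMap ↥E K) z₀ = z := rfl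
    have h₂ : (algebraMap ↥E K) c₀ = c := rfl
    simp [hg, h₁, h₂, hz]
  have hxint : IsIntegral ↥E x := ⟨g, hgmonic, by rw [← Polynomial.aeval_def]; exact haeval⟩
  have hgsep : g.Separable := by
    have hder : Polynomial.derivative g = - C c₀ := by
      simp [hg, Polynomial.derivative_X_pow, CharP.cast_eq_zero ↥E p]
    rw [Polynomial.Separable, hder]
    refine ⟨0, -C c₀⁻¹, ?_⟩
    have hnn : (-C c₀⁻¹ : Polynomial ↥E) * -C c₀ = C c₀⁻¹ * C c₀ := neg_mul_neg _ _
    rw [zero_mul, zero_add, hnn, ← map_mul, inv_mul_cancel₀ hc₀0, map_one]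
  have hxsep : IsSeparable ↥E x := hgsep.of_dvd (minpoly.dvd ↥E x haeval)
  -- towers
  set X' : IntermediateField ↥E K := IntermediateField.extendScalars hEX with hX'
  have hX'adj : X' = IntermediateField.adjoin ↥E ({x} : Set K) := by
    rw [hX']
    exact IntermediateField.extendScalars_adjoin hEX
  haveI hsepX'K : Algebra.IsSeparable ↥X' K :=
    ‹Algebra.IsSeparable ↥Xf K›
  haveI hfdX'K : FiniteDimensional ↥X' K :=
    ‹FiniteDimensional ↥Xf K›
  haveI : Algebra.IsSeparable ↥E ↥X' := by
    rw [hX'adj]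
    exact (IntermediateField.isSeparable_adjoin_simple_iff_isSeparable ↥E K).mpr hxsep
  haveI : FiniteDimensional ↥E ↥X' := by
    rw [hX'adj]
    exact IntermediateField.adjoin.finiteDimensional hxint
  haveI : Algebra.IsSeparable ↥E K := Algebra.IsSeparable.trans ↥E ↥X' K
  haveI : FiniteDimensional ↥E K := Module.Finite.trans ↥X' K
  -- primitive element for F over E
  set F' : IntermediateField ↥E K := IntermediateField.extendScalars hEF with hF'
  haveI : FiniteDimensional ↥E ↥F' := inferInstance
  haveI : Algebra.IsSeparable ↥E ↥F' :=
    Algebra.isSeparable_tower_bot_of_isSeparable ↥E ↥F' K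
  obtain ⟨w, hw⟩ := Field.exists_primitive_element ↥E ↥F'
  -- the key intermediate field M = k(x, w^p)
  set y₀ : K := (w : K) ^ p with hy₀
  set M : IntermediateField k K := IntermediateField.adjoin k ({x, y₀} : Set K) with hM
  have hxM : x ∈ M := IntermediateField.subset_adjoin _ _ (Set.mem_insert _ _)
  have hyM : y₀ ∈ M := IntermediateField.subset_adjoin _ _ (Set.mem_insert_of_mem _ rfl)
  have hzM : z ∈ M := by
    rw [hz]
    exact sub_mem (pow_mem hxM p) (mul_mem (M.algebraMap_mem _) hxM)
  -- every element of E has p-th power in M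
  have hEpow : ∀ t : K, t ∈ E → t ^ p ∈ M := by
    intro t ht
    induction ht using IntermediateField.adjoin_induction with
    | mem u hu => rw [Set.mem_singleton_iff.mp hu]; exact pow_mem hzM p
    | algebraMap u => rw [← map_pow]; exact M.algebraMap_mem _
    | add u v hu hv hu' hv' => rw [add_pow_char]; exact add_mem hu' hv'
    | inv u hu hu' => rw [inv_pow]; exact inv_mem hu'
    | mul u v hu hv hu' hv' => rw [mul_pow]; exact mul_mem hu' hv'
  -- every element of F has p-th power in M
  have hFpow : ∀ t : K, t ∈ F → t ^ p ∈ M := by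
    intro t ht
    have htF' : t ∈ F' := ht
    have : (⟨t, htF'⟩ : ↥F') ∈ IntermediateField.adjoin ↥E ({w} : Set ↥F') := by
      rw [show IntermediateField.adjoin ↥E ({w} : Set ↥F') = ⊤ from hw]
      trivial
    have key : ∀ s : ↥F', s ∈ IntermediateField.adjoin ↥E ({w} : Set ↥F') →
        (s : K) ^ p ∈ M := by
      intro s hs
      induction hs using IntermediateField.adjoin_induction with
      | mem u hu => rw [Set.mem_singleton_iff.mp hu]; exact hyM
      | algebraMap u =>
          have : ((algebraMap ↥E ↥F' u : ↥F') : K) = (u : K) := rfl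
          rw [this]
          exact hEpow _ u.2
      | add u v hu hv hu' hv' => push_cast; rw [add_pow_char]; exact add_mem hu' hv'
      | inv u hu hu' =>
          have hco : ((u⁻¹ : ↥F') : K) = ((u : K))⁻¹ := rfl
          rw [hco, inv_pow]; exact inv_mem hu'
      | mul u v hu hv hu' hv' => push_cast; rw [mul_pow]; exact mul_mem hu' hv'
    exact key _ this
  -- every element of K has p-th power in M
  have hKpow : ∀ t : K, t ^ p ∈ M := by
    intro t
    have ht : t ∈ IntermediateField.adjoin ↥F ({x} : Set K) := by rw [hFx]; trivial
    induction ht using IntermediateField.adjoin_induction with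
    | mem u hu => rw [Set.mem_singleton_iff.mp hu]; exact pow_mem hxM p
    | algebraMap u => exact hFpow _ u.2
    | add u v hu hv hu' hv' => rw [add_pow_char]; exact add_mem hu' hv'
    | inv u hu hu' => rw [inv_pow]; exact inv_mem hu'
    | mul u v hu hv hu' hv' => rw [mul_pow]; exact mul_mem hu' hv'
  -- M = K
  haveI : CharP ↥M p := charP_of_injective_algebraMap (algebraMap k ↥M).injective p
  haveI : ExpChar ↥M p := ExpChar.prime hp
  haveI : IsPurelyInseparable ↥M K := by
    rw [isPurelyInseparable_iff_pow_mem ↥M p]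
    intro t
    exact ⟨1, ⟨⟨t ^ p ^ 1, by simpa using hKpow t⟩, rfl⟩⟩
  have hXM : Xf ≤ M := IntermediateField.adjoin_le_iff.mpr (by simpa using hxM)
  haveI : Algebra.IsSeparable ↥(IntermediateField.extendScalars hXM) K :=
    Algebra.isSeparable_tower_top_of_isSeparable ↥Xf ↥(IntermediateField.extendScalars hXM) K
  haveI : Algebra.IsSeparable ↥M K :=
    ‹Algebra.IsSeparable ↥(IntermediateField.extendScalars hXM) K›
  have hMtop : M = ⊤ := by
    apply IntermediateField.toSubalgebra_injective
    apply Subalgebra.toSubmodule_injective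
    apply Submodule.eq_top_iff'.mpr
    intro t
    obtain ⟨m, hm⟩ := IsPurelyInseparable.surjective_algebraMap_of_isSeparable ↥M K t
    exact hm ▸ m.2
  -- σ fixes w
  have hwF : (w : K) ∈ F := w.2
  have hσw : σ (w : K) = (w : K) := hmemF' _ hwF
  -- main case distinction
  by_cases hspan : y₀ ∈ Submodule.span k ({1, x} : Set K)
  · -- then y₀ = algebraMap k K a, so K = k(x); use y = z ^ p instead
    obtain ⟨a, b, hab⟩ := Submodule.mem_span_pair.mp hspan
    have hDy : D y₀ = 0 := hDpow _
    have hb : b = 0 := by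
      have : D (a • (1 : K) + b • x) = 0 := by rw [hab, hDy]
      rw [map_add, Derivation.map_smul_of_tower, Derivation.map_smul_of_tower,
        Derivation.map_one_eq_zero, smul_zero, zero_add, hDx] at this
      have hbK : b • (1 : K) = 0 := this
      rcases smul_eq_zero.mp hbK with h | h
      · exact h
      · exact absurd h one_ne_zero
    have hya : y₀ = algebraMap k K a := by
      rw [← hab, hb, zero_smul, add_zero, Algebra.algebraMap_eq_smul_one]
    have hXtop : Xf = ⊤ := by
      apply top_le_iff.mp
      rw [← hMtop, hM]
      apply IntermediateField.adjoin_le_iff.mpr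
      intro t htm
      rcases htm with h | h
      · rw [h]; exact hxX
      · rw [Set.mem_singleton_iff.mp h, hya]; exact Xf.algebraMap_mem _
    refine ⟨z ^ p, ?_, ?_, ?_, z, hσz, rfl⟩
    · -- z ^ p ∉ span k {1, x}
      intro hmem
      obtain ⟨a', b', hab'⟩ := Submodule.mem_span_pair.mp hmem
      apply hx
      refine ⟨X ^ (p * p) - C ((α ^ (p - 1)) ^ p) * X ^ p - (C b' * X + C a'), ?_, ?_⟩
      · intro h0
        have hco : (X ^ (p * p) - C ((α ^ (p - 1)) ^ p) * X ^ p
            - (C b' * X + C a') : Polynomial k).coeff (p * p)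
            = (0 : Polynomial k).coeff (p * p) := by rw [h0]
        have hlt1 : p < p * p := by nlinarith
        have hlt2 : 1 < p * p := by nlinarith
        have hlt3 : 0 < p * p := by nlinarith
        rw [Polynomial.coeff_zero, Polynomial.coeff_sub, Polynomial.coeff_sub,
          Polynomial.coeff_add, Polynomial.coeff_C_mul, Polynomial.coeff_X_pow,
          Polynomial.coeff_X_pow, Polynomial.coeff_C_mul_X, Polynomial.coeff_C,
          if_pos rfl, if_neg (ne_of_gt hlt1), if_neg (ne_of_gt hlt2),
          if_neg (ne_of_gt hlt3)] at hco
        norm_num at hco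
      · have h2 : z ^ p = x ^ (p * p) - c ^ p * x ^ p := by
          rw [hz, sub_pow_char, mul_pow, ← pow_mul]
        have h1 : algebraMap k K ((α ^ (p - 1)) ^ p) = c ^ p := by rw [hc, map_pow]
        have h3 := hab'
        rw [Algebra.smul_def, Algebra.smul_def, mul_one] at h3
        simp only [map_sub, map_add, map_mul, map_pow, Polynomial.aeval_X, Polynomial.aeval_C]
        have hcalg : (algebraMap k K α) ^ (p - 1) = c := by rw [hc, map_pow]
        rw [hcalg, show x ^ (p * p) - c ^ p * x ^ p = z ^ p from h2.symm, ← h3]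
        ring
    · -- adjoin k {x, z^p} = ⊤
      apply top_le_iff.mp
      rw [← hXtop]
      apply IntermediateField.adjoin_le_iff.mpr
      intro t htm
      rw [Set.mem_singleton_iff.mp htm]
      exact IntermediateField.subset_adjoin _ _ (Set.mem_insert _ _)
    · rw [map_pow, hσz, sub_self, hDpow, mul_zero]
  · -- main case: y = y₀ = w ^ p
    refine ⟨y₀, hspan, hMtop, ?_, (w : K), hσw, rfl⟩
    rw [hy₀, map_pow, hσw, sub_self, hDpow, mul_zero]
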